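/- Let (K,𝒦) be a measurable space and Q a Markov kernel from K to K (so Q(x,·) is a probability measure on K for each x ∈ K, measurably in x). Suppose there is a constant C ≥ 1 such that Q(x,A) ≤ C·Q(y,A) for all x, y ∈ K and all A ∈ 𝒦. For a probability measure μ on K define (μQ)(A) := ∫_K Q(x,A) μ(dx). Then for any two probability measures μ and μ′ on K, ‖μQ − μ′Q‖_TV ≤ (1 − 1/C)·‖μ − μ′‖_TV. -/

import Mathlib

open MeasureTheory ProbabilityTheory
open scoped ENNReal

/-- Total variation norm of the difference of two measures:
`‖μ − ν‖_TV = sup_A (μ(A) − ν(A)) + sup_A (ν(A) − μ(A))`. -/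
noncomputable def tvDist {K : Type*} [MeasurableSpace K] (μ ν : Measure K) : ℝ≥0∞ :=
  (⨆ (A : Set K) (_ : MeasurableSet A), (μ A - ν A)) +
  (⨆ (A : Set K) (_ : MeasurableSet A), (ν A - μ A))

private lemma cancel_add_sub (x y c : ℝ≥0∞) : (x + c) - (y + c) ≤ x - y := by
  rw [tsub_le_iff_right]
  calc x + c ≤ (x - y + y) + c := add_le_add_left le_tsub_add c
    _ = x - y + (y + c) := by rw [add_assoc]

private lemma key {K : Type*} [MeasurableSpace K] (Q : Kernel K K) [IsMarkovKernel Q]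
    (C : ℝ) (hC : 1 ≤ C)
    (hQ : ∀ x y : K, ∀ A : Set K, MeasurableSet A →
      Q x A ≤ ENNReal.ofReal C * Q y A)
    (μ μ' : Measure K) [IsProbabilityMeasure μ] [IsProbabilityMeasure μ']
    (s : Set K) (hs : MeasurableSet s)
    (hs1 : ∀ t, MeasurableSet t → t ⊆ s → μ' t ≤ μ t)
    (hs2 : ∀ t, MeasurableSet t → t ⊆ sᶜ → μ t ≤ μ' t)
    (A : Set K) (hA : MeasurableSet A) :
    (μ.bind (fun x => Q x)) A - (μ'.bind (fun x => Q x)) A ≤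
      ENNReal.ofReal (1 - 1/C) * (μ s - μ' s) := by
  have hC0 : (0:ℝ) < C := lt_of_lt_of_le one_pos hC
  set c' := ENNReal.ofReal C with hc'
  have hc'1 : 1 ≤ c' := ENNReal.one_le_ofReal.mpr hC
  have hc'0 : c' ≠ 0 := by positivity
  have hc'top : c' ≠ ∞ := ENNReal.ofReal_ne_top
  set cE := ENNReal.ofReal (1 - 1/C) with hcEdef
  have hcE : cE = 1 - 1/c' := by
    rw [hcEdef, ENNReal.ofReal_sub _ (by positivity), ENNReal.ofReal_one,
      ENNReal.ofReal_div_of_pos hC0, ENNReal.ofReal_one]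
  have hcEtop : cE ≠ ∞ := ENNReal.ofReal_ne_top
  set f : K → ℝ≥0∞ := fun x => Q x A with hfdef
  have hf : Measurable f := Q.measurable_coe hA
  have hf1 : ∀ x, f x ≤ 1 := fun x => prob_le_one
  set m : ℝ≥0∞ := ⨅ x, f x with hmdef
  have hm_le : ∀ x, m ≤ f x := fun x => iInf_le _ x
  have hdiv : ∀ x, f x / c' ≤ m := by
    intro x
    refine le_iInf fun y => ?_
    rw [ENNReal.div_le_iff_le_mul (Or.inl hc'0) (Or.inl hc'top)]
    rw [mul_comm]
    exact hQ x y A hA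
  have hg_le : ∀ x, f x - m ≤ cE := by
    intro x
    calc f x - m ≤ f x - f x / c' := tsub_le_tsub_left (hdiv x) _
      _ ≤ f x * (1 - 1/c') := by
          rw [tsub_le_iff_right]
          refine le_of_eq ?_
          calc f x = f x * 1 := (mul_one _).symm
            _ = f x * ((1 - 1/c') + 1/c') := by
                rw [tsub_add_cancel_of_le (by
                  rw [one_div]; exact ENNReal.inv_le_one.mpr hc'1)]
            _ = f x * (1 - 1/c') + f x * (1/c') := mul_add _ _ _
            _ = f x * (1 - 1/c') + f x / c' := by
                rw [mul_one_div]
      _ ≤ 1 * (1 - 1/c') := mul_le_mul_of_nonneg_right (hf1 x) zero_le'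
      _ = cE := by rw [one_mul, hcE]
  set g : K → ℝ≥0∞ := fun x => f x - m with hgdef
  have hg : Measurable g := hf.sub measurable_const
  have hfg : ∀ x, f x = g x + m := fun x => (tsub_add_cancel_of_le (hm_le x)).symm
  have hbind : ∀ (ν : Measure K) [IsProbabilityMeasure ν],
      (ν.bind (fun x => Q x)) A = ∫⁻ x, g x ∂ν + m := by
    intro ν _
    rw [Measure.bind_apply hA Q.measurable.aemeasurable]
    calc ∫⁻ x, f x ∂ν = ∫⁻ x, (g x + m) ∂ν := by
          exact lintegral_congr fun x => hfg x
      _ = ∫⁻ x, g x ∂ν + m * ν Set.univ := by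
          rw [lintegral_add_right _ measurable_const, lintegral_const]
      _ = ∫⁻ x, g x ∂ν + m := by rw [measure_univ, mul_one]
  have hrestr : μ.restrict sᶜ ≤ μ'.restrict sᶜ := by
    refine Measure.le_iff.mpr fun t ht => ?_
    rw [Measure.restrict_apply ht, Measure.restrict_apply ht]
    exact hs2 _ (ht.inter hs.compl) Set.inter_subset_right
  set h : K → ℝ≥0∞ := fun x => cE - g x with hhdef
  have hgh : ∀ x, g x + h x = cE := fun x => add_tsub_cancel_of_le (hg_le x)
  have hsum : ∀ (ν : Measure K), ∫⁻ x in s, g x ∂ν + ∫⁻ x in s, h x ∂ν = cE * ν s := by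
    intro ν
    rw [← lintegral_add_right _ (show Measurable h from measurable_const.sub hg)]
    calc ∫⁻ x in s, (g x + h x) ∂ν = ∫⁻ _ in s, cE ∂ν := lintegral_congr fun x => hgh x
      _ = cE * ν s := setLIntegral_const s cE
  have hHmono : ∫⁻ x in s, h x ∂μ' ≤ ∫⁻ x in s, h x ∂μ := by
    refine lintegral_mono' ?_ le_rfl
    refine Measure.le_iff.mpr fun t ht => ?_
    rw [Measure.restrict_apply ht, Measure.restrict_apply ht]
    exact hs1 _ (ht.inter hs) Set.inter_subset_right
  have hHfin : ∫⁻ x in s, h x ∂μ' ≠ ∞ := by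
    refine ne_top_of_le_ne_top ?_ (le_add_self.trans (hsum μ').le)
    exact ENNReal.mul_ne_top hcEtop (measure_ne_top μ' s)
  calc (μ.bind (fun x => Q x)) A - (μ'.bind (fun x => Q x)) A
      = (∫⁻ x, g x ∂μ + m) - (∫⁻ x, g x ∂μ' + m) := by rw [hbind μ, hbind μ']
    _ ≤ ∫⁻ x, g x ∂μ - ∫⁻ x, g x ∂μ' := cancel_add_sub _ _ _
    _ ≤ (∫⁻ x in s, g x ∂μ + ∫⁻ x in sᶜ, g x ∂μ') -
        (∫⁻ x in s, g x ∂μ' + ∫⁻ x in sᶜ, g x ∂μ') := by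
        refine tsub_le_tsub ?_ (le_of_eq (lintegral_add_compl g hs (μ := μ')))
        rw [← lintegral_add_compl g hs (μ := μ)]
        exact add_le_add_right (lintegral_mono' hrestr le_rfl) _
    _ ≤ ∫⁻ x in s, g x ∂μ - ∫⁻ x in s, g x ∂μ' := cancel_add_sub _ _ _
    _ ≤ cE * μ s - cE * μ' s := by
        rw [tsub_le_iff_right]
        rw [← ENNReal.add_le_add_iff_right hHfin]
        calc ∫⁻ x in s, g x ∂μ + ∫⁻ x in s, h x ∂μ'
            ≤ ∫⁻ x in s, g x ∂μ + ∫⁻ x in s, h x ∂μ := add_le_add_right hHmono _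
          _ = cE * μ s := hsum μ
          _ ≤ (cE * μ s - cE * μ' s) + cE * μ' s := le_tsub_add
          _ = (cE * μ s - cE * μ' s) + (∫⁻ x in s, g x ∂μ' + ∫⁻ x in s, h x ∂μ') := by
              rw [hsum μ']
          _ = ((cE * μ s - cE * μ' s) + ∫⁻ x in s, g x ∂μ') + ∫⁻ x in s, h x ∂μ' := by
              rw [add_assoc]
    _ ≤ cE * (μ s - μ' s) := by
        rw [tsub_le_iff_right, ← mul_add]
        exact mul_le_mul_of_nonneg_left le_tsub_add zero_le'

theorem stmt1 {K : Type*} [MeasurableSpace K] (Q : Kernel K K) [IsMarkovKernel Q]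
    (C : ℝ) (hC : 1 ≤ C)
    (hQ : ∀ x y : K, ∀ A : Set K, MeasurableSet A →
      Q x A ≤ ENNReal.ofReal C * Q y A)
    (μ μ' : Measure K) [IsProbabilityMeasure μ] [IsProbabilityMeasure μ'] :
    tvDist (μ.bind (fun x => Q x)) (μ'.bind (fun x => Q x)) ≤
      ENNReal.ofReal (1 - 1/C) * tvDist μ μ' := by
  obtain ⟨s, hs, hs1, hs2⟩ := hahn_decomposition (μ := μ) (ν := μ')
  have h1 : (⨆ (A : Set K) (_ : MeasurableSet A),
      ((μ.bind (fun x => Q x)) A - (μ'.bind (fun x => Q x)) A)) ≤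
      ENNReal.ofReal (1 - 1/C) * (μ s - μ' s) :=
    iSup₂_le fun A hA => key Q C hC hQ μ μ' s hs hs1 hs2 A hA
  have h2 : (⨆ (A : Set K) (_ : MeasurableSet A),
      ((μ'.bind (fun x => Q x)) A - (μ.bind (fun x => Q x)) A)) ≤
      ENNReal.ofReal (1 - 1/C) * (μ' sᶜ - μ sᶜ) :=
    iSup₂_le fun A hA => key Q C hC hQ μ' μ sᶜ hs.compl hs2
      (fun t ht hts => hs1 t ht (by rwa [compl_compl] at hts)) A hA
  calc tvDist (μ.bind (fun x => Q x)) (μ'.bind (fun x => Q x))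
      ≤ ENNReal.ofReal (1 - 1/C) * (μ s - μ' s) +
        ENNReal.ofReal (1 - 1/C) * (μ' sᶜ - μ sᶜ) := add_le_add h1 h2
    _ = ENNReal.ofReal (1 - 1/C) * ((μ s - μ' s) + (μ' sᶜ - μ sᶜ)) := (mul_add _ _ _).symm
    _ ≤ ENNReal.ofReal (1 - 1/C) * tvDist μ μ' := by
        refine mul_le_mul_of_nonneg_left (add_le_add ?_ ?_) zero_le'
        · exact le_iSup₂ (f := fun A (_ : MeasurableSet A) => μ A - μ' A) s hs
        · exact le_iSup₂ (f := fun A (_ : MeasurableSet A) => μ' A - μ A) sᶜ hs.compl
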